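/- For every t ∈ ℝ, e^{At} h hᵀ (e^{At})ᵀ = e^{2θt} · [[1/θ², 1/θ], [1/θ, 1]] + e^{θt} · [[−2/θ², −1/θ], [−1/θ, 0]] + [[1/θ², 0], [0, 0]], where the summands are 2×2 real matrices written row-by-row. -/

import Mathlib

open Matrix

lemma expA (θ : ℝ) (hθ : θ ≠ 0) (t : ℝ) :
    NormedSpace.exp (t • !![0, 1; 0, θ]) =
      !![1, (Real.exp (θ*t) - 1)/θ; 0, Real.exp (θ*t)] := by
  have hP : IsUnit (!![1, 1; 0, θ] : Matrix (Fin 2) (Fin 2) ℝ) := by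
    rw [Matrix.isUnit_iff_isUnit_det, Matrix.det_fin_two_of]
    simpa using hθ.isUnit
  have hPinv : (!![1, 1; 0, θ] : Matrix (Fin 2) (Fin 2) ℝ)⁻¹ = !![1, -1/θ; 0, 1/θ] := by
    rw [Matrix.inv_def, Matrix.det_fin_two_of, Matrix.adjugate_fin_two_of]
    ext i j
    fin_cases i <;> fin_cases j <;>
      simp [Matrix.smul_apply] <;> field_simp
  have hd : (diagonal ![0, θ*t] : Matrix (Fin 2) (Fin 2) ℝ) = !![0, 0; 0, θ*t] := by
    ext i j
    fin_cases i <;> fin_cases j <;> simp [Matrix.diagonal_apply]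
  have hd2 : (diagonal (NormedSpace.exp ![0, θ*t]) : Matrix (Fin 2) (Fin 2) ℝ)
      = !![1, 0; 0, Real.exp (θ*t)] := by
    rw [Pi.exp_def]
    ext i j
    fin_cases i <;> fin_cases j <;>
      simp [Matrix.diagonal_apply, NormedSpace.exp_zero, ← Real.exp_eq_exp_ℝ]
  have key : t • (!![0, 1; 0, θ] : Matrix (Fin 2) (Fin 2) ℝ)
      = !![1, 1; 0, θ] * diagonal ![0, θ*t] * (!![1, 1; 0, θ])⁻¹ := by
    rw [hPinv, hd]
    ext i j
    fin_cases i <;> fin_cases j <;>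
      simp [Matrix.mul_apply, Fin.sum_univ_two] <;> field_simp <;> ring
  rw [key, Matrix.exp_conj _ _ hP, Matrix.exp_diagonal, hd2, hPinv]
  ext i j
  fin_cases i <;> fin_cases j <;>
    simp [Matrix.mul_apply, Fin.sum_univ_two] <;> field_simp <;> ring

/-- For the Langevin drift matrix `A = [[0,1],[0,θ]]` with `θ ≠ 0` and
`h = (0,1)ᵀ`, for every `t ∈ ℝ`:
`e^{At} h hᵀ (e^{At})ᵀ = e^{2θt} [[1/θ², 1/θ],[1/θ, 1]] + e^{θt} [[-2/θ², -1/θ],[-1/θ, 0]]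
  + [[1/θ², 0],[0, 0]]`. -/
theorem langevin_noise_outer_product
    (θ : ℝ) (hθ : θ ≠ 0)
    (A : Matrix (Fin 2) (Fin 2) ℝ) (hA : A = !![0, 1; 0, θ])
    (h : Fin 2 → ℝ) (hh : h = ![0, 1]) :
    ∀ t : ℝ,
      NormedSpace.exp (t • A) * vecMulVec h h * (NormedSpace.exp (t • A))ᵀ
        = Real.exp (2 * θ * t) • !![1/θ^2, 1/θ; 1/θ, 1]
          + Real.exp (θ * t) • !![-2/θ^2, -1/θ; -1/θ, 0]
          + !![1/θ^2, 0; 0, 0] := by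
  intro t
  subst hA hh
  rw [expA θ hθ t]
  have hv : vecMulVec ![0,1] ![0,1] = !![0,(0:ℝ);0,1] := by
    ext i j
    fin_cases i <;> fin_cases j <;> simp [vecMulVec_apply]
  rw [hv]
  have hT : (!![1, (Real.exp (θ*t) - 1)/θ; 0, Real.exp (θ*t)])ᵀ
      = !![1, 0; (Real.exp (θ*t) - 1)/θ, Real.exp (θ*t)] := by
    ext i j
    fin_cases i <;> fin_cases j <;> simp
  rw [hT]
  have h2 : Real.exp (2 * θ * t) = Real.exp (θ * t) * Real.exp (θ * t) := by
    rw [← Real.exp_add]; ring_nf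
  ext i j
  fin_cases i <;> fin_cases j <;>
    simp [Matrix.mul_apply, Fin.sum_univ_two, Matrix.transpose_apply, h2] <;>
    field_simp <;> ring
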